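/- The free-energy functional is stationary at the normalized exponential of minus the quantum action: the function f : ℝ → ℝ defined in the context is differentiable at s = 0 with derivative 0 (HasDerivAt f 0 0). Equivalently, along any exponential family of normalized generalized states Γ_s = e^{−(S + sK)} / Tr[e^{−(S+sK)}] through Γ* = e^{−S}/Tr[e^{−S}], the functional F[Γ] = Tr[Γ S] + Tr[Γ log Γ] has vanishing first variation at Γ*. -/

import Mathlib

open Matrix Complex NormedSpace
open scoped Nat

set_option linter.unusedSectionVars false
namespace FreeEnergyAux

variable {ι : Type*} [Fintype ι] [DecidableEq ι] [Nonempty ι]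

attribute [local instance] Matrix.linftyOpNormedAddCommGroup Matrix.linftyOpNormedRing
  Matrix.linftyOpNormedAlgebra

/-- The topology of the `linftyOp` norm, made the one found for matrices. -/
noncomputable abbrev matTop : TopologicalSpace (Matrix ι ι ℂ) :=
  (Matrix.linftyOpNormedAddCommGroup (m := ι) (n := ι) (α := ℂ)).toUniformSpace.toTopologicalSpace

attribute [local instance] matTop

lemma hasDerivAt_pow_line (A B : Matrix ι ι ℂ) (n : ℕ) (z : ℂ) :
    HasDerivAt (fun w : ℂ => (A + w • B) ^ n)
      (∑ i ∈ Finset.range n, (A + z • B) ^ i * B * (A + z • B) ^ (n - 1 - i)) z := by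
  set M := A + z • B with hM
  induction n with
  | zero => simpa using hasDerivAt_const z (1 : Matrix ι ι ℂ)
  | succ n ih =>
    have hMd : HasDerivAt (fun w : ℂ => A + w • B) B z := by
      simpa using ((hasDerivAt_id z).smul_const B).const_add A
    have h2 : HasDerivAt (fun w : ℂ => (A + w • B) ^ (n + 1))
        ((∑ i ∈ Finset.range n, M ^ i * B * M ^ (n - 1 - i)) * M + M ^ n * B) z := by
      have := ih.mul hMd
      simp only [Pi.mul_def, ← pow_succ] at this
      exact this
    convert h2 using 1
    rw [Finset.sum_range_succ, Finset.sum_mul]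
    congr 1
    · apply Finset.sum_congr rfl
      intro i hi
      have hi' : i < n := Finset.mem_range.mp hi
      have h3 : n - 1 - i + 1 = n + 1 - 1 - i := by omega
      calc M ^ i * B * M ^ (n + 1 - 1 - i) = M ^ i * B * (M ^ (n - 1 - i) * M) := by
            rw [← pow_succ, h3]
        _ = M ^ i * B * M ^ (n - 1 - i) * M := by simp [mul_assoc]
    · simp

/-- `fun X => trace (X * C)` as a continuous linear map. -/
noncomputable def traceMulCLM (C : Matrix ι ι ℂ) : Matrix ι ι ℂ →L[ℂ] ℂ :=
  LinearMap.toContinuousLinearMap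
    ((Matrix.traceLinearMap ι ℂ ℂ).comp (LinearMap.mulRight ℂ C))

@[simp] lemma traceMulCLM_apply (C M : Matrix ι ι ℂ) :
    traceMulCLM C M = Matrix.trace (M * C) := rfl


lemma norm_middle (A B : Matrix ι ι ℂ) {z : ℂ} (hz : ‖z‖ ≤ 1) (n i : ℕ) (hi : i < n) :
    ‖(A + z • B) ^ i * B * (A + z • B) ^ (n - 1 - i)‖ ≤ (‖A‖ + ‖B‖) ^ (n - 1) * ‖B‖ := by
  set M := A + z • B with hM
  have hMle : ‖M‖ ≤ ‖A‖ + ‖B‖ := by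
    calc ‖M‖ ≤ ‖A‖ + ‖z • B‖ := norm_add_le _ _
      _ ≤ ‖A‖ + ‖B‖ := by
          rw [norm_smul]
          have : ‖z‖ * ‖B‖ ≤ 1 * ‖B‖ := mul_le_mul_of_nonneg_right hz (norm_nonneg _)
          linarith [this]
  have hc : (0:ℝ) ≤ ‖A‖ + ‖B‖ := by positivity
  calc ‖M ^ i * B * M ^ (n - 1 - i)‖ ≤ ‖M ^ i * B‖ * ‖M ^ (n - 1 - i)‖ := norm_mul_le _ _
    _ ≤ ‖M ^ i‖ * ‖B‖ * ‖M ^ (n - 1 - i)‖ :=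
        mul_le_mul_of_nonneg_right (norm_mul_le _ _) (norm_nonneg _)
    _ ≤ ‖M‖ ^ i * ‖B‖ * ‖M‖ ^ (n - 1 - i) := by
        gcongr
        · exact norm_pow_le _ _
        · exact norm_pow_le _ _
    _ ≤ (‖A‖ + ‖B‖) ^ i * ‖B‖ * (‖A‖ + ‖B‖) ^ (n - 1 - i) := by
        gcongr
    _ = (‖A‖ + ‖B‖) ^ (n - 1) * ‖B‖ := by
        rw [mul_comm _ ‖B‖, mul_assoc, ← pow_add]
        rw [mul_comm ‖B‖ _]
        congr 2
        omega

lemma summable_nn (K a : ℝ) : Summable (fun n : ℕ => K * ((n : ℝ) * a ^ (n - 1) / n !)) := by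
  apply (summable_nat_add_iff 1).mp
  have h2 : (fun n : ℕ => K * (((n:ℕ)+1 : ℝ) * a ^ ((n+1) - 1) / (n+1)!))
      = fun n : ℕ => K * (a ^ n / n !) := by
    funext n
    have hfact : ((n + 1)! : ℝ) = (n + 1) * n ! := by
      rw [Nat.factorial_succ]; push_cast; ring
    have hne : (n ! : ℝ) ≠ 0 := Nat.cast_ne_zero.mpr n.factorial_ne_zero
    simp only [Nat.add_sub_cancel, hfact]
    field_simp
  have h1 : Summable (fun n : ℕ => K * (a ^ n / n !)) :=
    (Real.summable_pow_div_factorial a).mul_left _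
  have := h2 ▸ h1
  convert this using 2 with n
  push_cast
  all_goals norm_num
  rfl

lemma key (A B C : Matrix ι ι ℂ) :
    HasDerivAt (fun z : ℂ => Matrix.trace (NormedSpace.exp (A + z • B) * C))
      (∑' (n : ℕ), ((n ! : ℂ)⁻¹ •
        Matrix.trace ((∑ i ∈ Finset.range n, A ^ i * B * A ^ (n - 1 - i)) * C))) 0 := by
  classical
  set T := traceMulCLM (ι := ι) C with hT
  set c : ℝ := ‖A‖ + ‖B‖ with hc
  have hc0 : (0:ℝ) ≤ c := by positivity
  set g : ℕ → ℂ → ℂ := fun n z => ((n ! : ℂ))⁻¹ • T ((A + z • B) ^ n) with hg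
  set g' : ℕ → ℂ → ℂ := fun n z => ((n ! : ℂ))⁻¹ •
      T (∑ i ∈ Finset.range n, (A + z • B) ^ i * B * (A + z • B) ^ (n - 1 - i)) with hg'
  set u : ℕ → ℝ := fun n => ‖T‖ * ‖B‖ * ((n : ℝ) * c ^ (n - 1) / n !) with hu
  have husum : Summable u := summable_nn (‖T‖ * ‖B‖) c
  have hgd : ∀ n y, y ∈ Metric.ball (0:ℂ) 1 → HasDerivAt (g n) (g' n y) y := by
    intro n y _
    exact ((T.hasFDerivAt.comp_hasDerivAt y (hasDerivAt_pow_line A B n y)).const_smul ((n ! : ℂ))⁻¹)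
  have hgb : ∀ n y, y ∈ Metric.ball (0:ℂ) 1 → ‖g' n y‖ ≤ u n := by
    intro n y hy
    have hy1 : ‖y‖ ≤ 1 := le_of_lt (by simpa using hy)
    have hsum : ‖∑ i ∈ Finset.range n, (A + y • B) ^ i * B * (A + y • B) ^ (n - 1 - i)‖
        ≤ (n : ℝ) * (c ^ (n - 1) * ‖B‖) := by
      calc ‖∑ i ∈ Finset.range n, (A + y • B) ^ i * B * (A + y • B) ^ (n - 1 - i)‖
          ≤ ∑ i ∈ Finset.range n, ‖(A + y • B) ^ i * B * (A + y • B) ^ (n - 1 - i)‖ :=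
            norm_sum_le _ _
        _ ≤ ∑ _i ∈ Finset.range n, c ^ (n - 1) * ‖B‖ := by
            apply Finset.sum_le_sum
            intro i hi
            exact norm_middle A B hy1 n i (Finset.mem_range.mp hi)
        _ = (n : ℝ) * (c ^ (n - 1) * ‖B‖) := by
            simp [Finset.sum_const, Finset.card_range, nsmul_eq_mul]
    have : ‖g' n y‖ ≤ ((n ! : ℝ))⁻¹ * (‖T‖ * ((n : ℝ) * (c ^ (n - 1) * ‖B‖))) := by
      rw [hg']
      simp only [norm_smul, norm_inv, Complex.norm_natCast]
      gcongr
      refine le_trans (T.le_opNorm _) ?_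
      exact mul_le_mul_of_nonneg_left hsum (norm_nonneg _)
    calc ‖g' n y‖ ≤ ((n ! : ℝ))⁻¹ * (‖T‖ * ((n : ℝ) * (c ^ (n - 1) * ‖B‖))) := this
      _ = u n := by rw [hu]; ring
  have hg0 : Summable fun n => g n 0 := by
    apply Summable.of_norm_bounded
      ((Real.summable_pow_div_factorial ‖A‖).mul_left ‖T‖)
    intro n
    have h0 : (A + (0:ℂ) • B) = A := by simp
    rw [hg]
    simp only [h0, norm_smul, norm_inv, Complex.norm_natCast]
    have h1 : ‖T (A ^ n)‖ ≤ ‖T‖ * ‖A‖ ^ n :=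
      (T.le_opNorm _).trans (mul_le_mul_of_nonneg_left (norm_pow_le _ _) (norm_nonneg _))
    calc ((n ! : ℝ))⁻¹ * ‖T (A ^ n)‖ ≤ ((n ! : ℝ))⁻¹ * (‖T‖ * ‖A‖ ^ n) :=
          mul_le_mul_of_nonneg_left h1 (by positivity)
      _ = ‖T‖ * (‖A‖ ^ n / n !) := by rw [div_eq_mul_inv]; ring
  have H := hasDerivAt_tsum_of_isPreconnected husum Metric.isOpen_ball
    ((convex_ball (0:ℂ) 1).isPreconnected) hgd hgb (Metric.mem_ball_self one_pos) hg0
    (Metric.mem_ball_self one_pos)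
  have hfun : (fun z : ℂ => ∑' n, g n z) =
      fun z : ℂ => Matrix.trace (NormedSpace.exp (A + z • B) * C) := by
    funext z
    have hs := expSeries_summable' (𝕂 := ℂ) (A + z • B)
    rw [show Matrix.trace (NormedSpace.exp (A + z • B) * C) = T (NormedSpace.exp (A + z • B)) from rfl,
      exp_eq_tsum ℂ, T.map_tsum hs]
    simp [hg]
  have hval : (∑' n, g' n 0) = ∑' (n : ℕ), ((n ! : ℂ)⁻¹ •
      Matrix.trace ((∑ i ∈ Finset.range n, A ^ i * B * A ^ (n - 1 - i)) * C)) := by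
    refine tsum_congr fun n => ?_
    simp only [hg', hT, traceMulCLM_apply, zero_smul, add_zero]
  rw [hfun, hval] at H
  exact H


lemma trace_cyclic (A B : Matrix ι ι ℂ) (n : ℕ) :
    Matrix.trace ((∑ i ∈ Finset.range n, A ^ i * B * A ^ (n - 1 - i)) * (1 : Matrix ι ι ℂ))
      = (n : ℂ) * Matrix.trace (A ^ (n - 1) * B) := by
  rw [mul_one, Matrix.trace_sum]
  have h : ∀ i ∈ Finset.range n,
      Matrix.trace (A ^ i * B * A ^ (n - 1 - i)) = Matrix.trace (A ^ (n - 1) * B) := by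
    intro i hi
    have hi' : i < n := Finset.mem_range.mp hi
    have he : n - 1 - i + i = n - 1 := by omega
    rw [Matrix.trace_mul_comm, ← mul_assoc, ← pow_add, he]
  rw [Finset.sum_congr rfl h, Finset.sum_const, Finset.card_range, nsmul_eq_mul]

lemma key1 (A B : Matrix ι ι ℂ) :
    (∑' (n : ℕ), ((n ! : ℂ)⁻¹ •
      Matrix.trace ((∑ i ∈ Finset.range n, A ^ i * B * A ^ (n - 1 - i)) * (1 : Matrix ι ι ℂ))))
    = Matrix.trace (NormedSpace.exp A * B) := by
  classical
  set T := traceMulCLM (ι := ι) B with hT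
  have hterm : (fun n : ℕ => ((n ! : ℂ)⁻¹ •
      Matrix.trace ((∑ i ∈ Finset.range n, A ^ i * B * A ^ (n - 1 - i)) * (1 : Matrix ι ι ℂ))))
      = fun n : ℕ => (n ! : ℂ)⁻¹ • ((n : ℂ) * Matrix.trace (A ^ (n - 1) * B)) := by
    funext n; rw [trace_cyclic]
  rw [hterm]
  have hsummable : Summable (fun n : ℕ =>
      (n ! : ℂ)⁻¹ • ((n : ℂ) * Matrix.trace (A ^ (n - 1) * B))) := by
    apply Summable.of_norm_bounded (summable_nn ‖T‖ ‖A‖)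
    intro n
    have h1 : ‖Matrix.trace (A ^ (n-1) * B)‖ ≤ ‖T‖ * ‖A‖ ^ (n-1) := by
      have := (T.le_opNorm (A ^ (n-1))).trans
        (mul_le_mul_of_nonneg_left (norm_pow_le _ _) (norm_nonneg _))
      simpa [hT] using this
    rw [norm_smul, norm_inv, Complex.norm_natCast, norm_mul, Complex.norm_natCast]
    calc (n ! : ℝ)⁻¹ * ((n : ℝ) * ‖Matrix.trace (A ^ (n-1) * B)‖)
        ≤ (n ! : ℝ)⁻¹ * ((n : ℝ) * (‖T‖ * ‖A‖ ^ (n-1))) := by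
          gcongr
      _ = ‖T‖ * ((n : ℝ) * ‖A‖ ^ (n - 1) / n !) := by
          rw [div_eq_mul_inv]; ring
  rw [Summable.tsum_eq_zero_add hsummable]
  have h0 : ((0:ℕ)! : ℂ)⁻¹ • (((0:ℕ) : ℂ) * Matrix.trace (A ^ ((0:ℕ) - 1) * B)) = 0 := by
    simp
  rw [h0, zero_add]
  have hshift : (fun n : ℕ => (((n+1)! : ℂ))⁻¹ •
      (((n+1 : ℕ) : ℂ) * Matrix.trace (A ^ ((n+1) - 1) * B)))
      = fun n : ℕ => (n ! : ℂ)⁻¹ • Matrix.trace (A ^ n * B) := by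
    funext n
    have hfact : (((n + 1)! : ℕ) : ℂ) = ((n:ℂ) + 1) * (n ! : ℂ) := by
      rw [Nat.factorial_succ]; push_cast; ring
    have hne : ((n ! : ℕ) : ℂ) ≠ 0 := Nat.cast_ne_zero.mpr n.factorial_ne_zero
    have hne1 : ((n:ℂ) + 1) ≠ 0 := Nat.cast_add_one_ne_zero n
    simp only [Nat.add_sub_cancel, hfact, smul_eq_mul]
    push_cast
    field_simp
  rw [hshift]
  have hs := expSeries_summable' (𝕂 := ℂ) A
  rw [show Matrix.trace (NormedSpace.exp A * B) = T (NormedSpace.exp A) from rfl, exp_eq_tsum ℂ, T.map_tsum hs]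
  congr 1
  funext n
  simp [hT]

lemma trace_exp_re_pos (A : Matrix ι ι ℂ) (hA : A.IsHermitian) :
    0 < (Matrix.trace (NormedSpace.exp A)).re := by
  have h2 : ((2:ℂ)⁻¹ • A).IsHermitian := by
    unfold Matrix.IsHermitian at *
    rw [conjTranspose_smul, hA]
    norm_num
  set B := NormedSpace.exp ((2:ℂ)⁻¹ • A) with hB
  have hBA : NormedSpace.exp A = B * B := by
    have hhalf : (2:ℂ)⁻¹ • A + (2:ℂ)⁻¹ • A = A := by
      rw [← add_smul]; norm_num
    rw [← hhalf]; exact Matrix.exp_add_of_commute _ _ (Commute.refl _)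
  have hBH : B.IsHermitian := h2.exp
  have hBU : IsUnit B := Matrix.isUnit_exp _
  have hBne : B ≠ 0 := by
    intro h
    rw [h] at hBU
    exact not_isUnit_zero hBU
  obtain ⟨i, j, hij⟩ : ∃ i j, B i j ≠ 0 := by
    by_contra hc
    push_neg at hc
    exact hBne (by ext i j; simpa using hc i j)
  have hBsym : ∀ i j, B j i = star (B i j) := by
    intro i j
    conv_lhs => rw [← hBH]
    rfl
  have htr : (Matrix.trace (B * B)).re = ∑ i, ∑ j, Complex.normSq (B i j) := by
    simp only [Matrix.trace, Matrix.diag, Matrix.mul_apply, Complex.re_sum]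
    refine Finset.sum_congr rfl fun i _ => ?_
    refine Finset.sum_congr rfl fun j _ => ?_
    rw [hBsym i j, show B i j * star (B i j) = ((Complex.normSq (B i j) : ℝ) : ℂ) from
      Complex.mul_conj _]
    exact Complex.ofReal_re _
  rw [hBA, htr]
  apply Finset.sum_pos'
  · intro k _
    exact Finset.sum_nonneg fun l _ => Complex.normSq_nonneg _
  · refine ⟨i, Finset.mem_univ i, Finset.sum_pos' (fun l _ => Complex.normSq_nonneg _)
      ⟨j, Finset.mem_univ j, Complex.normSq_pos.mpr hij⟩⟩

lemma hasDerivAt_re_trace_mul (A B C : Matrix ι ι ℂ) :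
    ∃ d : ℝ, HasDerivAt (fun s : ℝ => (Matrix.trace (NormedSpace.exp (A + s • B) * C)).re) d 0 := by
  have H := key A B C
  obtain ⟨d, hd⟩ : ∃ d, HasDerivAt (fun z : ℂ => Matrix.trace (NormedSpace.exp (A + z • B) * C)) d
      ((0:ℝ):ℂ) := ⟨_, by rw [Complex.ofReal_zero]; exact H⟩
  have H2 := hd.comp_ofReal
  exact ⟨_, Complex.reCLM.hasFDerivAt.comp_hasDerivAt 0 H2⟩

lemma hasDerivAt_re_trace_exp (A B : Matrix ι ι ℂ) :
    HasDerivAt (fun s : ℝ => (Matrix.trace (NormedSpace.exp (A + s • B))).re)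
      ((Matrix.trace (NormedSpace.exp A * B)).re) 0 := by
  have H := key A B 1
  rw [key1] at H
  simp only [mul_one] at H
  have H0 : HasDerivAt (fun z : ℂ => Matrix.trace (NormedSpace.exp (A + z • B)))
      (Matrix.trace (NormedSpace.exp A * B)) ((0:ℝ):ℂ) := by
    rw [Complex.ofReal_zero]; exact H
  have H2 := H0.comp_ofReal
  exact Complex.reCLM.hasFDerivAt.comp_hasDerivAt 0 H2

end FreeEnergyAux


/-- Stationarity of the free-energy functional at the normalized exponential of minus
the quantum action: for Hermitian `S, K`, the function
`f(s) = −s·Re Tr[e^{−(S+sK)} K]/Z(s) − log Z(s)` with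
`Z(s) = Re Tr[e^{−(S+sK)}]` — i.e. the functional
`F[Γ_s] = Tr[Γ_s S] + Tr[Γ_s log Γ_s]` along the exponential family
`Γ_s = e^{−(S+sK)}/Tr[e^{−(S+sK)}]` — has vanishing derivative at `s = 0`. -/
theorem free_energy_stationary_at_action {ι : Type*} [Fintype ι] [DecidableEq ι]
    [Nonempty ι] (S K : Matrix ι ι ℂ) (hS : S.IsHermitian) (hK : K.IsHermitian) :
    HasDerivAt (fun s : ℝ =>
      -s * (Matrix.trace (NormedSpace.exp (-(S + s • K)) * K)).re /
          (Matrix.trace (NormedSpace.exp (-(S + s • K)))).re -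
        Real.log (Matrix.trace (NormedSpace.exp (-(S + s • K)))).re) 0 0 := by
  have hrw : ∀ s : ℝ, -(S + s • K) = (-S) + s • (-K) := by
    intro s; rw [neg_add, ← smul_neg]
  obtain ⟨d₁, hgr⟩ := FreeEnergyAux.hasDerivAt_re_trace_mul (-S) (-K) K
  have hZr := FreeEnergyAux.hasDerivAt_re_trace_exp (-S) (-K)
  have hpos : 0 < (Matrix.trace (NormedSpace.exp (-S))).re :=
    FreeEnergyAux.trace_exp_re_pos (-S) hS.neg
  have hzero : (-S) + (0:ℝ) • (-K) = -S := by simp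
  have hne : (Matrix.trace (NormedSpace.exp ((-S) + (0:ℝ) • (-K)))).re ≠ 0 := by
    rw [hzero]; exact ne_of_gt hpos
  have hid : HasDerivAt (fun s : ℝ => -s) (-1 : ℝ) 0 := (hasDerivAt_id (0:ℝ)).neg
  have hnum := hid.mul hgr
  have hdiv := hnum.div hZr hne
  have hlog := hZr.log hne
  have hfinal := hdiv.sub hlog
  have hfun : (fun s : ℝ =>
      -s * (Matrix.trace (NormedSpace.exp (-(S + s • K)) * K)).re /
          (Matrix.trace (NormedSpace.exp (-(S + s • K)))).re -
        Real.log (Matrix.trace (NormedSpace.exp (-(S + s • K)))).re)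
      = fun s : ℝ =>
      -s * (Matrix.trace (NormedSpace.exp ((-S) + s • (-K)) * K)).re /
          (Matrix.trace (NormedSpace.exp ((-S) + s • (-K)))).re -
        Real.log (Matrix.trace (NormedSpace.exp ((-S) + s • (-K)))).re := by
    funext s; rw [hrw s]
  rw [hfun]
  simp only [hzero, neg_zero, zero_mul, mul_zero, add_zero, zero_smul] at hfinal
  refine HasDerivAt.congr_deriv hfinal ?_
  rw [mul_neg, Matrix.trace_neg]
  simp only [Complex.neg_re, Pi.mul_apply]
  field_simp
  ring
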